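/- Let G be a transitive but imprimitive permutation group on a finite set Ω with the 3-et property. Then every nontrivial block system of G has exactly two blocks, and any witnessing 3-set has two points in one block and one in the other. Moreover, if |Ω| > 4, then G has a unique nontrivial block system. -/

import Mathlib

set_option linter.unusedSectionVars false


open Finset

variable {Ω : Type*} [Fintype Ω] [DecidableEq Ω]

/-- `P` is a partition of the finite set `Ω`. -/
def IsPartition (P : Finset (Finset Ω)) : Prop :=
  (∀ p ∈ P, p.Nonempty) ∧
  (∀ p ∈ P, ∀ q ∈ P, p ≠ q → Disjoint p q) ∧
  (∀ x : Ω, ∃ p ∈ P, x ∈ p)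

/-- `S` is a transversal of the partition `P`. -/
def IsTransversal (S : Finset Ω) (P : Finset (Finset Ω)) : Prop :=
  ∀ p ∈ P, (S ∩ p).card = 1

/-- The `k`-set `S` witnesses the `k`-existential transversal property for `G`. -/
def Witnesses (G : Subgroup (Equiv.Perm Ω)) (k : ℕ) (S : Finset Ω) : Prop :=
  S.card = k ∧ ∀ P : Finset (Finset Ω), IsPartition P → P.card = k →
    ∃ g ∈ G, IsTransversal (S.image ⇑g) P

/-- `P` is a block system for `G`: a `G`-invariant partition of `Ω`. -/
def IsBlockSystem (G : Subgroup (Equiv.Perm Ω)) (P : Finset (Finset Ω)) : Prop :=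
  IsPartition P ∧ ∀ p ∈ P, ∀ g ∈ G, p.image ⇑g ∈ P

/-- A block system is nontrivial if all its parts have size strictly between `1`
and `|Ω|`. -/
def NontrivialSystem (P : Finset (Finset Ω)) : Prop :=
  ∀ p ∈ P, 1 < p.card ∧ p.card < Fintype.card Ω

namespace ThreeEt

/-- `x` and `y` lie in a common part of `P`. -/
def SameBlock (P : Finset (Finset Ω)) (x y : Ω) : Prop := ∃ p ∈ P, x ∈ p ∧ y ∈ p

/-- `T` contains two distinct points in a common `P`-block and a common `Q`-block. -/
def HasPair2 (P Q : Finset (Finset Ω)) (T : Finset Ω) : Prop :=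
  ∃ x ∈ T, ∃ y ∈ T, x ≠ y ∧ SameBlock P x y ∧ SameBlock Q x y

/-- `T` contains two points in different `P`-blocks. -/
def HasSplit (P : Finset (Finset Ω)) (T : Finset Ω) : Prop :=
  ∃ x ∈ T, ∃ y ∈ T, ¬ SameBlock P x y

lemma mem_unique {P : Finset (Finset Ω)} (hP : IsPartition P) {p q : Finset Ω} {x : Ω}
    (hp : p ∈ P) (hq : q ∈ P) (hx : x ∈ p) (hy : x ∈ q) : p = q := by
  by_contra h
  exact (Finset.disjoint_left.mp (hP.2.1 p hp q hq h)) hx hy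

lemma isPartition3 {X Y Z : Finset Ω} (hX : X.Nonempty) (hY : Y.Nonempty) (hZ : Z.Nonempty)
    (hXY : Disjoint X Y) (hXZ : Disjoint X Z) (hYZ : Disjoint Y Z)
    (hcov : ∀ x : Ω, x ∈ X ∨ x ∈ Y ∨ x ∈ Z) :
    IsPartition ({X, Y, Z} : Finset (Finset Ω)) ∧ ({X, Y, Z} : Finset (Finset Ω)).card = 3 := by
  have hne1 : X ≠ Y := by rintro rfl; exact hX.ne_empty (disjoint_self.mp hXY)
  have hne2 : X ≠ Z := by rintro rfl; exact hX.ne_empty (disjoint_self.mp hXZ)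
  have hne3 : Y ≠ Z := by rintro rfl; exact hY.ne_empty (disjoint_self.mp hYZ)
  refine ⟨⟨?_, ?_, ?_⟩, ?_⟩
  · intro p hp
    simp only [mem_insert, mem_singleton] at hp
    rcases hp with rfl | rfl | rfl <;> assumption
  · intro p hp q hq hne
    simp only [mem_insert, mem_singleton] at hp hq
    rcases hp with rfl | rfl | rfl <;> rcases hq with rfl | rfl | rfl <;>
      first
        | exact (hne rfl).elim
        | exact hXY | exact hXZ | exact hYZ
        | exact hXY.symm | exact hXZ.symm | exact hYZ.symm
  · intro x
    rcases hcov x with h | h | h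
    exacts [⟨X, by simp, h⟩, ⟨Y, by simp, h⟩, ⟨Z, by simp, h⟩]
  · rw [card_insert_of_notMem (by simp [hne1, hne2]),
      card_insert_of_notMem (by simp [hne3]), card_singleton]

lemma transversal_mem {T : Finset Ω} {Pa : Finset (Finset Ω)} {X : Finset Ω}
    (hT : IsTransversal T Pa) (hX : X ∈ Pa) : ∃ u, u ∈ T ∧ u ∈ X ∧ T ∩ X = {u} := by
  obtain ⟨u, hu⟩ := Finset.card_eq_one.mp (hT X hX)
  have := hu ▸ Finset.mem_singleton_self u
  exact ⟨u, (mem_inter.mp this).1, (mem_inter.mp this).2, hu⟩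

lemma sameBlock_map {G : Subgroup (Equiv.Perm Ω)} {P : Finset (Finset Ω)}
    (hP : IsBlockSystem G P) {g : Equiv.Perm Ω} (hg : g ∈ G) {x y : Ω}
    (h : SameBlock P x y) : SameBlock P (g x) (g y) := by
  obtain ⟨p, hp, hx, hy⟩ := h
  exact ⟨p.image g, hP.2 p hp g hg, mem_image_of_mem _ hx, mem_image_of_mem _ hy⟩

lemma hasPair2_image {G : Subgroup (Equiv.Perm Ω)} {P Q : Finset (Finset Ω)}
    (hP : IsBlockSystem G P) (hQ : IsBlockSystem G Q) {g : Equiv.Perm Ω} (hg : g ∈ G)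
    {T : Finset Ω} (h : HasPair2 P Q T) : HasPair2 P Q (T.image ⇑g) := by
  obtain ⟨x, hx, y, hy, hxy, h1, h2⟩ := h
  exact ⟨g x, mem_image_of_mem _ hx, g y, mem_image_of_mem _ hy,
    fun he => hxy (g.injective he), sameBlock_map hP hg h1, sameBlock_map hQ hg h2⟩

lemma hasPair2_of_image {G : Subgroup (Equiv.Perm Ω)} {P Q : Finset (Finset Ω)}
    (hP : IsBlockSystem G P) (hQ : IsBlockSystem G Q) {g : Equiv.Perm Ω} (hg : g ∈ G)
    {T : Finset Ω} (h : HasPair2 P Q (T.image ⇑g)) : HasPair2 P Q T := by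
  have := hasPair2_image hP hQ (inv_mem hg) h
  rwa [Finset.image_image, show (⇑g⁻¹ ∘ ⇑g) = id by ext a; simp, Finset.image_id] at this

lemma hasSplit_of_image {G : Subgroup (Equiv.Perm Ω)} {P : Finset (Finset Ω)}
    (hP : IsBlockSystem G P) {g : Equiv.Perm Ω} (hg : g ∈ G)
    {T : Finset Ω} (h : HasSplit P (T.image ⇑g)) : HasSplit P T := by
  obtain ⟨x, hx, y, hy, hxy⟩ := h
  obtain ⟨x₀, hx₀, rfl⟩ := mem_image.mp hx
  obtain ⟨y₀, hy₀, rfl⟩ := mem_image.mp hy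
  exact ⟨x₀, hx₀, y₀, hy₀, fun hs => hxy (sameBlock_map hP hg hs)⟩

lemma card_block_eq {G : Subgroup (Equiv.Perm Ω)} {P : Finset (Finset Ω)}
    (htrans : ∀ a b : Ω, ∃ g ∈ G, g a = b) (hP : IsBlockSystem G P)
    {p q : Finset Ω} (hp : p ∈ P) (hq : q ∈ P) : p.card = q.card := by
  obtain ⟨a, ha⟩ := hP.1.1 p hp
  obtain ⟨b, hb⟩ := hP.1.1 q hq
  obtain ⟨g, hg, hgab⟩ := htrans a b
  have h1 : p.image ⇑g ∈ P := hP.2 p hp g hg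
  have h2 : g a ∈ p.image ⇑g := mem_image_of_mem _ ha
  rw [hgab] at h2
  have h3 := mem_unique hP.1 h1 hq h2 hb
  rw [← h3, card_image_of_injective _ g.injective]

lemma two_part {P : Finset (Finset Ω)} {p q : Finset Ω} (hpart : IsPartition P)
    (h : P = {p, q}) (hne : p ≠ q) : ∀ a : Ω, a ∈ q ↔ a ∉ p := by
  intro a
  have hp : p ∈ P := by simp [h]
  have hq : q ∈ P := by simp [h]
  constructor
  · intro haq hap
    exact hne (mem_unique hpart hp hq hap haq)
  · intro hap
    obtain ⟨r, hr, har⟩ := hpart.2.2 a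
    rw [h, mem_insert, mem_singleton] at hr
    rcases hr with rfl | rfl
    · exact absurd har hap
    · exact har


/-- If some block of `P` and some block of `Q` have an intersection of size at least 2
(and not all of `Ω`), then the witnessing set has a pair in a common `P`-block and
common `Q`-block. -/
lemma pair_lemma {G : Subgroup (Equiv.Perm Ω)} {S : Finset Ω} (hS : Witnesses G 3 S)
    {P Q : Finset (Finset Ω)} (hP : IsBlockSystem G P) (hQ : IsBlockSystem G Q)
    {p q : Finset Ω} (hp : p ∈ P) (hq : q ∈ Q)
    (h2 : 2 ≤ (p ∩ q).card) (hn : (p ∩ q).card < Fintype.card Ω) :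
    HasPair2 P Q S := by
  obtain ⟨x, hx⟩ : (p ∩ q).Nonempty := card_pos.mp (by omega)
  set X : Finset Ω := {x} with hXdef
  set Y : Finset Ω := (p ∩ q).erase x with hYdef
  set Z : Finset Ω := univ \ (p ∩ q) with hZdef
  have hYne : Y.Nonempty := by
    rw [← card_pos, hYdef, card_erase_of_mem hx]; omega
  have hZne : Z.Nonempty := by
    have hne : p ∩ q ≠ univ := by
      intro h; rw [h, card_univ] at hn; omega
    obtain ⟨z, hz, hz'⟩ := exists_of_ssubset (ssubset_univ_iff.mpr hne)
    exact ⟨z, mem_sdiff.mpr ⟨hz, hz'⟩⟩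
  have hXY : Disjoint X Y := disjoint_singleton_left.mpr (notMem_erase x _)
  have hXZ : Disjoint X Z := disjoint_singleton_left.mpr (by simp [hZdef, hx])
  have hYZ : Disjoint Y Z :=
    (Finset.sdiff_disjoint (s := p ∩ q) (t := univ)).symm.mono_left (erase_subset _ _)
  have hcov : ∀ a : Ω, a ∈ X ∨ a ∈ Y ∨ a ∈ Z := by
    intro a
    by_cases ha : a ∈ p ∩ q
    · by_cases hax : a = x
      · left; simp [hXdef, hax]
      · right; left; exact mem_erase.mpr ⟨hax, ha⟩
    · right; right; exact mem_sdiff.mpr ⟨mem_univ a, ha⟩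
  obtain ⟨hpart3, hc3⟩ := isPartition3 ⟨x, mem_singleton_self x⟩ hYne hZne hXY hXZ hYZ hcov
  obtain ⟨g, hg, htv⟩ := hS.2 _ hpart3 hc3
  obtain ⟨u, huT, huX, -⟩ := transversal_mem htv (show X ∈ ({X, Y, Z} : Finset (Finset Ω)) by simp)
  obtain ⟨v, hvT, hvY, -⟩ := transversal_mem htv (show Y ∈ ({X, Y, Z} : Finset (Finset Ω)) by simp)
  have hux : u = x := mem_singleton.mp huX
  have hv : v ∈ p ∩ q := mem_of_mem_erase hvY
  have hvu : v ≠ u := hux ▸ ne_of_mem_erase hvY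
  apply hasPair2_of_image hP hQ hg
  refine ⟨u, huT, v, hvT, hvu.symm, ⟨p, hp, ?_, ?_⟩, ⟨q, hq, ?_, ?_⟩⟩
  · exact hux ▸ (mem_inter.mp hx).1
  · exact (mem_inter.mp hv).1
  · exact hux ▸ (mem_inter.mp hx).2
  · exact (mem_inter.mp hv).2

lemma partA {G : Subgroup (Equiv.Perm Ω)} {S : Finset Ω} (hS : Witnesses G 3 S)
    {P : Finset (Finset Ω)} (hP : IsBlockSystem G P) (hnt : NontrivialSystem P) :
    P.card = 2 := by
  have hpart := hP.1
  -- some block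
  obtain ⟨x₀⟩ : Nonempty Ω := by
    have : S.Nonempty := card_pos.mp (by rw [hS.1]; omega)
    exact ⟨this.choose⟩
  obtain ⟨p₀, hp₀, hx₀p⟩ := hpart.2.2 x₀
  have hp₀c := hnt p₀ hp₀
  -- S has a pair in a common block
  have hpairS : HasPair2 P P S := by
    apply pair_lemma hS hP hP hp₀ hp₀ <;> rw [inter_self] <;> omega
  -- at least two blocks
  have hlt : 1 < P.card := by
    have hne : p₀ ≠ univ := by
      intro h; rw [h, card_univ] at hp₀c; omega
    obtain ⟨z, -, hz'⟩ := exists_of_ssubset (ssubset_univ_iff.mpr hne)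
    obtain ⟨q₀, hq₀, hzq⟩ := hpart.2.2 z
    exact one_lt_card.mpr ⟨p₀, hp₀, q₀, hq₀, fun h => hz' (h ▸ hzq)⟩
  -- at most two blocks
  have hle : ¬ 2 < P.card := by
    intro h3
    obtain ⟨p₁, p₂, p₃, h1, h2, h3', hne12, hne13, hne23⟩ := Finset.two_lt_card_iff.mp h3
    set Z : Finset Ω := univ \ (p₁ ∪ p₂) with hZdef
    have hd12 := hpart.2.1 p₁ h1 p₂ h2 hne12
    have hd13 := hpart.2.1 p₁ h1 p₃ h3' hne13
    have hd23 := hpart.2.1 p₂ h2 p₃ h3' hne23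
    have hZne : Z.Nonempty := by
      obtain ⟨z, hz3⟩ := hpart.1 p₃ h3'
      refine ⟨z, mem_sdiff.mpr ⟨mem_univ z, ?_⟩⟩
      simp only [mem_union, not_or]
      exact ⟨Finset.disjoint_right.mp hd13 hz3, Finset.disjoint_right.mp hd23 hz3⟩
    have h1Z : Disjoint p₁ Z :=
      (Finset.sdiff_disjoint (s := p₁ ∪ p₂) (t := univ)).symm.mono_left subset_union_left
    have h2Z : Disjoint p₂ Z :=
      (Finset.sdiff_disjoint (s := p₁ ∪ p₂) (t := univ)).symm.mono_left subset_union_right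
    have hcov : ∀ a : Ω, a ∈ p₁ ∨ a ∈ p₂ ∨ a ∈ Z := by
      intro a
      by_cases ha1 : a ∈ p₁
      · exact Or.inl ha1
      by_cases ha2 : a ∈ p₂
      · exact Or.inr (Or.inl ha2)
      · exact Or.inr (Or.inr (mem_sdiff.mpr ⟨mem_univ a, by simp [ha1, ha2]⟩))
    obtain ⟨hpart3, hc3⟩ :=
      isPartition3 (hpart.1 p₁ h1) (hpart.1 p₂ h2) hZne hd12 h1Z h2Z hcov
    obtain ⟨g, hg, htv⟩ := hS.2 _ hpart3 hc3
    obtain ⟨u, huT, hu1, huE⟩ :=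
      transversal_mem htv (show p₁ ∈ ({p₁, p₂, Z} : Finset (Finset Ω)) by simp)
    obtain ⟨v, hvT, hv2, hvE⟩ :=
      transversal_mem htv (show p₂ ∈ ({p₁, p₂, Z} : Finset (Finset Ω)) by simp)
    obtain ⟨w, hwT, hwZ, hwE⟩ :=
      transversal_mem htv (show Z ∈ ({p₁, p₂, Z} : Finset (Finset Ω)) by simp)
    have hw1 : w ∉ p₁ := fun h => by
      have := mem_sdiff.mp hwZ; simp [mem_union, h] at this
    have hw2 : w ∉ p₂ := fun h => by
      have := mem_sdiff.mp hwZ; simp [mem_union, h] at this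
    have hmem : ∀ c ∈ S.image ⇑g, c = u ∨ c = v ∨ c = w := by
      intro c hc
      rcases hcov c with h | h | h
      · exact Or.inl (mem_singleton.mp (huE ▸ mem_inter.mpr ⟨hc, h⟩))
      · exact Or.inr (Or.inl (mem_singleton.mp (hvE ▸ mem_inter.mpr ⟨hc, h⟩)))
      · exact Or.inr (Or.inr (mem_singleton.mp (hwE ▸ mem_inter.mpr ⟨hc, h⟩)))
    obtain ⟨x, hxT, y, hyT, hxy, ⟨p, hp, hxp, hyp⟩, -⟩ := hasPair2_image hP hP hg hpairS
    rcases hmem x hxT with rfl | rfl | rfl <;> rcases hmem y hyT with rfl | rfl | rfl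
    · exact hxy rfl
    · exact hne12 ((mem_unique hpart hp h1 hxp hu1).symm.trans
        (mem_unique hpart hp h2 hyp hv2))
    · exact hw1 ((mem_unique hpart hp h1 hxp hu1) ▸ hyp)
    · exact hne12 ((mem_unique hpart hp h1 hyp hu1).symm.trans
        (mem_unique hpart hp h2 hxp hv2))
    · exact hxy rfl
    · exact hw2 ((mem_unique hpart hp h2 hxp hv2) ▸ hyp)
    · exact hw1 ((mem_unique hpart hp h1 hyp hu1) ▸ hxp)
    · exact hw2 ((mem_unique hpart hp h2 hyp hv2) ▸ hxp)
    · exact hxy rfl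
  omega

lemma partB {G : Subgroup (Equiv.Perm Ω)} {S : Finset Ω} (hS : Witnesses G 3 S)
    {P : Finset (Finset Ω)} (hP : IsBlockSystem G P) (hnt : NontrivialSystem P) :
    ∃ p ∈ P, ∃ q ∈ P, p ≠ q ∧ (S ∩ p).card = 2 ∧ (S ∩ q).card = 1 := by
  have hpart := hP.1
  have hc2 := partA hS hP hnt
  obtain ⟨p, q, hpq, hPeq⟩ := Finset.card_eq_two.mp hc2
  have hp : p ∈ P := by simp [hPeq]
  have hq : q ∈ P := by simp [hPeq]
  have hpc := hnt p hp
  have hqc := hnt q hq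
  have hdis : Disjoint p q := hpart.2.1 p hp q hq hpq
  have hcov : ∀ a : Ω, a ∈ p ∨ a ∈ q := by
    intro a
    obtain ⟨r, hr, har⟩ := hpart.2.2 a
    rw [hPeq, mem_insert, mem_singleton] at hr
    rcases hr with rfl | rfl
    · exact Or.inl har
    · exact Or.inr har
  -- S has a pair in a common block
  have hpairS : HasPair2 P P S := by
    apply pair_lemma hS hP hP hp hp <;> rw [inter_self] <;> omega
  -- S has a split pair
  have hsplitS : HasSplit P S := by
    obtain ⟨y, hy⟩ := hpart.1 q hq
    have hyp : y ∉ p := Finset.disjoint_right.mp hdis hy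
    set Y : Finset Ω := q.erase y with hYdef
    have hYne : Y.Nonempty := by
      rw [← card_pos, hYdef, card_erase_of_mem hy]; omega
    have hpy : Disjoint p ({y} : Finset Ω) := disjoint_singleton_right.mpr hyp
    have hpY : Disjoint p Y := hdis.mono_right (erase_subset _ _)
    have hyY : Disjoint ({y} : Finset Ω) Y := disjoint_singleton_left.mpr (notMem_erase y _)
    have hcov3 : ∀ a : Ω, a ∈ p ∨ a ∈ ({y} : Finset Ω) ∨ a ∈ Y := by
      intro a
      rcases hcov a with h | h
      · exact Or.inl h
      · by_cases hay : a = y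
        · exact Or.inr (Or.inl (by simp [hay]))
        · exact Or.inr (Or.inr (mem_erase.mpr ⟨hay, h⟩))
    obtain ⟨hpart3, hc3⟩ :=
      isPartition3 (hpart.1 p hp) ⟨y, mem_singleton_self y⟩ hYne hpy hpY hyY hcov3
    obtain ⟨g, hg, htv⟩ := hS.2 _ hpart3 hc3
    obtain ⟨u, huT, hu1, -⟩ :=
      transversal_mem htv (show p ∈ ({p, {y}, Y} : Finset (Finset Ω)) by simp)
    have hm2 : ({y} : Finset Ω) ∈ ({p, {y}, Y} : Finset (Finset Ω)) := by
      clear_value Y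
      exact mem_insert_of_mem (mem_insert_self _ _)
    have := transversal_mem htv hm2
    obtain ⟨v, hvT, hv2, -⟩ := this
    apply hasSplit_of_image hP hg
    refine ⟨u, huT, v, hvT, ?_⟩
    rintro ⟨r, hr, hur, hvr⟩
    have h1 : r = p := mem_unique hpart hr hp hur hu1
    have h2 : r = q := mem_unique hpart hr hq hvr (by rw [mem_singleton.mp hv2]; exact hy)
    exact hpq (h1.symm.trans h2)
  -- counting
  have hsum : (S ∩ p).card + (S ∩ q).card = 3 := by
    have hun : S ∩ p ∪ S ∩ q = S := by
      ext a
      simp only [mem_union, mem_inter]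
      constructor
      · rintro (⟨h, -⟩ | ⟨h, -⟩) <;> exact h
      · intro h
        rcases hcov a with h' | h'
        · exact Or.inl ⟨h, h'⟩
        · exact Or.inr ⟨h, h'⟩
    have := Finset.card_union_of_disjoint (s := S ∩ p) (t := S ∩ q)
      (hdis.mono inter_subset_right inter_subset_right)
    rw [hun] at this
    rw [← this, hS.1]
  have h2le : 2 ≤ (S ∩ p).card ∨ 2 ≤ (S ∩ q).card := by
    obtain ⟨x, hxS, y, hyS, hxy, ⟨r, hr, hxr, hyr⟩, -⟩ := hpairS
    rw [hPeq, mem_insert, mem_singleton] at hr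
    rcases hr with rfl | rfl
    · exact Or.inl (one_lt_card.mpr
        ⟨x, mem_inter.mpr ⟨hxS, hxr⟩, y, mem_inter.mpr ⟨hyS, hyr⟩, hxy⟩)
    · exact Or.inr (one_lt_card.mpr
        ⟨x, mem_inter.mpr ⟨hxS, hxr⟩, y, mem_inter.mpr ⟨hyS, hyr⟩, hxy⟩)
  have hboth : (S ∩ p).Nonempty ∧ (S ∩ q).Nonempty := by
    obtain ⟨x, hxS, y, hyS, hns⟩ := hsplitS
    rcases hcov x with hx | hx <;> rcases hcov y with hy | hy
    · exact absurd ⟨p, hp, hx, hy⟩ hns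
    · exact ⟨⟨x, mem_inter.mpr ⟨hxS, hx⟩⟩, ⟨y, mem_inter.mpr ⟨hyS, hy⟩⟩⟩
    · exact ⟨⟨y, mem_inter.mpr ⟨hyS, hy⟩⟩, ⟨x, mem_inter.mpr ⟨hxS, hx⟩⟩⟩
    · exact absurd ⟨q, hq, hx, hy⟩ hns
  have hb1 := card_pos.mpr hboth.1
  have hb2 := card_pos.mpr hboth.2
  rcases h2le with h | h
  · exact ⟨p, hp, q, hq, hpq, by omega, by omega⟩
  · exact ⟨q, hq, p, hp, hpq.symm, by omega, by omega⟩

lemma partC {G : Subgroup (Equiv.Perm Ω)} (htrans : ∀ a b : Ω, ∃ g ∈ G, g a = b)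
    {S : Finset Ω} (hS : Witnesses G 3 S) (h4 : 4 < Fintype.card Ω)
    {P Q : Finset (Finset Ω)} (hP : IsBlockSystem G P) (hntP : NontrivialSystem P)
    (hQ : IsBlockSystem G Q) (hntQ : NontrivialSystem Q) : P = Q := by
  obtain ⟨A, A', hAA', hPeq⟩ := Finset.card_eq_two.mp (partA hS hP hntP)
  obtain ⟨B, B', hBB', hQeq⟩ := Finset.card_eq_two.mp (partA hS hQ hntQ)
  have hA : A ∈ P := by simp [hPeq]
  have hA' : A' ∈ P := by simp [hPeq]
  have hB : B ∈ Q := by simp [hQeq]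
  have hB' : B' ∈ Q := by simp [hQeq]
  have hP2 : ∀ a : Ω, a ∈ A' ↔ a ∉ A := two_part hP.1 hPeq hAA'
  have hQ2 : ∀ a : Ω, a ∈ B' ↔ a ∉ B := two_part hQ.1 hQeq hBB'
  have hP2' : ∀ a : Ω, a ∈ A ↔ a ∉ A' :=
    two_part hP.1 (by rw [hPeq, pair_comm]) hAA'.symm
  have hQ2' : ∀ a : Ω, a ∈ B ↔ a ∉ B' :=
    two_part hQ.1 (by rw [hQeq, pair_comm]) hBB'.symm
  have hdisA : Disjoint A A' := hP.1.2.1 A hA A' hA' hAA'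
  have hdisB : Disjoint B B' := hQ.1.2.1 B hB B' hB' hBB'
  by_contra hPQ
  have hAB : A ≠ B := by
    rintro rfl
    have h : A' = B' := by ext a; rw [hP2 a, hQ2 a]
    exact hPQ (by rw [hPeq, hQeq, h])
  have hAB' : A ≠ B' := by
    intro h
    have h2 : A' = B := by
      ext a; rw [hP2 a, hQ2' a, h]
    apply hPQ
    rw [hPeq, hQeq, h, h2, pair_comm]
  -- all blocks have the same size
  have hcA : A.card = A'.card := card_block_eq htrans hP hA hA'
  have hcB : B.card = B'.card := card_block_eq htrans hQ hB hB'
  have hsum : ∀ (C C' : Finset Ω), Disjoint C C' → (∀ a : Ω, a ∈ C' ↔ a ∉ C) →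
      C.card + C'.card = Fintype.card Ω := by
    intro C C' hd hcc
    have hun : C ∪ C' = univ := by
      ext a
      simp only [mem_union, mem_univ, iff_true]
      by_cases h : a ∈ C
      · exact Or.inl h
      · exact Or.inr ((hcc a).mpr h)
    rw [← Finset.card_union_of_disjoint hd, hun, card_univ]
  have hsA := hsum A A' hdisA hP2
  have hsB := hsum B B' hdisB hQ2
  have hcAB : A.card = B.card := by omega
  have hm3 : 3 ≤ A.card := by omega
  -- all four intersections are nonempty
  have hsub_eq : ∀ (C D : Finset Ω), C.card = D.card → C ⊆ D → C = D := by
    intro C D hc hsub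
    exact Finset.eq_of_subset_of_card_le hsub (le_of_eq hc.symm)
  have hABne : (A ∩ B).Nonempty := by
    rw [nonempty_iff_ne_empty]
    intro h
    apply hAB'
    apply hsub_eq A B' (by omega)
    intro a ha
    rw [hQ2 a]
    intro hab
    exact notMem_empty a (h ▸ mem_inter.mpr ⟨ha, hab⟩)
  have hAB'ne : (A ∩ B').Nonempty := by
    rw [nonempty_iff_ne_empty]
    intro h
    apply hAB
    apply hsub_eq A B (by omega)
    intro a ha
    rw [hQ2' a]
    intro hab
    exact notMem_empty a (h ▸ mem_inter.mpr ⟨ha, hab⟩)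
  have hA'Bne : (A' ∩ B).Nonempty := by
    rw [nonempty_iff_ne_empty]
    intro h
    apply hAB
    apply (hsub_eq B A (by omega) ?_).symm
    intro b hb
    rw [hP2' b]
    intro hba
    exact notMem_empty b (h ▸ mem_inter.mpr ⟨hba, hb⟩)
  have hA'B'ne : (A' ∩ B').Nonempty := by
    rw [nonempty_iff_ne_empty]
    intro h
    apply hAB'
    apply (hsub_eq B' A (by omega) ?_).symm
    intro b hb
    rw [hP2' b]
    intro hba
    exact notMem_empty b (h ▸ mem_inter.mpr ⟨hba, hb⟩)
  -- S has a pair in a common P-block and a common Q-block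
  have hΦ : HasPair2 P Q S := by
    have hunA : (A ∩ B) ∪ (A ∩ B') = A := by
      ext a
      simp only [mem_union, mem_inter]
      constructor
      · rintro (⟨h, -⟩ | ⟨h, -⟩) <;> exact h
      · intro h
        by_cases hb : a ∈ B
        · exact Or.inl ⟨h, hb⟩
        · exact Or.inr ⟨h, (hQ2 a).mpr hb⟩
    have hds : Disjoint (A ∩ B) (A ∩ B') :=
      hdisB.mono inter_subset_right inter_subset_right
    have hcs := Finset.card_union_of_disjoint hds
    rw [hunA] at hcs
    have h2 : 2 ≤ (A ∩ B).card ∨ 2 ≤ (A ∩ B').card := by omega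
    have hlt : ∀ D : Finset Ω, (A ∩ D).card < Fintype.card Ω := by
      intro D
      calc (A ∩ D).card ≤ A.card := card_le_card inter_subset_left
        _ < Fintype.card Ω := (hntP A hA).2
    rcases h2 with h | h
    · exact pair_lemma hS hP hQ hA hB h (hlt B)
    · exact pair_lemma hS hP hQ hA hB' h (hlt B')
  -- construct the contradicting partition
  set X : Finset Ω := A ∩ B' with hXdef
  set Y : Finset Ω := A' ∩ B with hYdef
  set Z : Finset Ω := (A ∩ B) ∪ (A' ∩ B') with hZdef
  have hZne : Z.Nonempty := hABne.mono subset_union_left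
  have hXY : Disjoint X Y := hdisA.mono inter_subset_left inter_subset_left
  have hXZ : Disjoint X Z := disjoint_union_right.mpr
    ⟨hdisB.symm.mono inter_subset_right inter_subset_right,
      hdisA.mono inter_subset_left inter_subset_left⟩
  have hYZ : Disjoint Y Z := disjoint_union_right.mpr
    ⟨hdisA.symm.mono inter_subset_left inter_subset_left,
      hdisB.mono inter_subset_right inter_subset_right⟩
  have hcov : ∀ a : Ω, a ∈ X ∨ a ∈ Y ∨ a ∈ Z := by
    intro a
    by_cases haA : a ∈ A <;> by_cases haB : a ∈ B
    · exact Or.inr (Or.inr (mem_union_left _ (mem_inter.mpr ⟨haA, haB⟩)))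
    · exact Or.inl (mem_inter.mpr ⟨haA, (hQ2 a).mpr haB⟩)
    · exact Or.inr (Or.inl (mem_inter.mpr ⟨(hP2 a).mpr haA, haB⟩))
    · exact Or.inr (Or.inr (mem_union_right _
        (mem_inter.mpr ⟨(hP2 a).mpr haA, (hQ2 a).mpr haB⟩)))
  obtain ⟨hpart3, hc3⟩ := isPartition3 hAB'ne hA'Bne hZne hXY hXZ hYZ hcov
  obtain ⟨g, hg, htv⟩ := hS.2 _ hpart3 hc3
  obtain ⟨u, huT, huX, huE⟩ :=
    transversal_mem htv (show X ∈ ({X, Y, Z} : Finset (Finset Ω)) by simp)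
  obtain ⟨v, hvT, hvY, hvE⟩ :=
    transversal_mem htv (show Y ∈ ({X, Y, Z} : Finset (Finset Ω)) by simp)
  obtain ⟨w, hwT, hwZ, hwE⟩ :=
    transversal_mem htv (show Z ∈ ({X, Y, Z} : Finset (Finset Ω)) by simp)
  have hmem : ∀ c ∈ S.image ⇑g, c = u ∨ c = v ∨ c = w := by
    intro c hc
    rcases hcov c with h | h | h
    · exact Or.inl (mem_singleton.mp (huE ▸ mem_inter.mpr ⟨hc, h⟩))
    · exact Or.inr (Or.inl (mem_singleton.mp (hvE ▸ mem_inter.mpr ⟨hc, h⟩)))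
    · exact Or.inr (Or.inr (mem_singleton.mp (hwE ▸ mem_inter.mpr ⟨hc, h⟩)))
  have huA : u ∈ A := (mem_inter.mp huX).1
  have huB' : u ∈ B' := (mem_inter.mp huX).2
  have hvA' : v ∈ A' := (mem_inter.mp hvY).1
  have hvB : v ∈ B := (mem_inter.mp hvY).2
  -- the main case analysis: no pair of T lies in a common P-block and common Q-block
  have key : ∀ x y : Ω, x = u ∨ x = v ∨ x = w → y = u ∨ y = v ∨ y = w → x ≠ y →
      SameBlock P x y → SameBlock Q x y → False := by
    have main : ∀ x y : Ω, x = u → (y = v ∨ y = w) →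
        SameBlock P x y → SameBlock Q x y → False := by
      rintro x y rfl hy ⟨p, hpm, hxp, hyp⟩ ⟨q, hqm, hxq, hyq⟩
      have hpA : p = A := mem_unique hP.1 hpm hA hxp huA
      have hqB' : q = B' := mem_unique hQ.1 hqm hB' hxq huB'
      rcases hy with hy | hy
      · exact Finset.disjoint_left.mp hdisA (hpA ▸ hy ▸ hyp) hvA'
      · -- y = w
        have hwA : w ∈ A := hpA ▸ hy ▸ hyp
        have hwB : w ∈ B := by
          rcases mem_union.mp hwZ with h | h
          · exact (mem_inter.mp h).2
          · exact absurd (mem_inter.mp h).1 (Finset.disjoint_left.mp hdisA hwA)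
        exact Finset.disjoint_left.mp hdisB hwB (hqB' ▸ hy ▸ hyq)
    have main2 : ∀ x y : Ω, x = v → y = w →
        SameBlock P x y → SameBlock Q x y → False := by
      rintro x y rfl hy ⟨p, hpm, hxp, hyp⟩ ⟨q, hqm, hxq, hyq⟩
      have hpA' : p = A' := mem_unique hP.1 hpm hA' hxp hvA'
      have hqB : q = B := mem_unique hQ.1 hqm hB hxq hvB
      have hwA' : w ∈ A' := hpA' ▸ hy ▸ hyp
      have hwB' : w ∈ B' := by
        rcases mem_union.mp hwZ with h | h
        · exact absurd (mem_inter.mp h).1 (Finset.disjoint_right.mp hdisA hwA')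
        · exact (mem_inter.mp h).2
      exact Finset.disjoint_right.mp hdisB hwB' (hqB ▸ hy ▸ hyq)
    intro x y hx hy hxy hsP hsQ
    have hsP' : SameBlock P y x := by obtain ⟨p, h1, h2, h3⟩ := hsP; exact ⟨p, h1, h3, h2⟩
    have hsQ' : SameBlock Q y x := by obtain ⟨q, h1, h2, h3⟩ := hsQ; exact ⟨q, h1, h3, h2⟩
    rcases hx with rfl | rfl | rfl <;> rcases hy with rfl | rfl | rfl
    · exact hxy rfl
    · exact main _ _ rfl (Or.inl rfl) hsP hsQ
    · exact main _ _ rfl (Or.inr rfl) hsP hsQ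
    · exact main _ _ rfl (Or.inl rfl) hsP' hsQ'
    · exact hxy rfl
    · exact main2 _ _ rfl rfl hsP hsQ
    · exact main _ _ rfl (Or.inr rfl) hsP' hsQ'
    · exact main2 _ _ rfl rfl hsP' hsQ'
    · exact hxy rfl
  obtain ⟨x, hxT, y, hyT, hxy, hsP, hsQ⟩ := hasPair2_image hP hQ hg hΦ
  exact key x y (hmem x hxT) (hmem y hyT) hxy hsP hsQ

end ThreeEt

/-- A transitive imprimitive group with `3`-et has exactly two blocks in every
nontrivial block system; a witnessing `3`-set has two points in one block and one
in another; and for `n > 4` the nontrivial block system is unique. -/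
theorem three_et_imprimitive (G : Subgroup (Equiv.Perm Ω))
    (htrans : ∀ a b : Ω, ∃ g ∈ G, g a = b)
    (himprim : ∃ P : Finset (Finset Ω), IsBlockSystem G P ∧ NontrivialSystem P)
    (S : Finset Ω) (hS : Witnesses G 3 S) :
    (∀ P : Finset (Finset Ω), IsBlockSystem G P → NontrivialSystem P → P.card = 2) ∧
    (∀ P : Finset (Finset Ω), IsBlockSystem G P → NontrivialSystem P →
      ∃ p ∈ P, ∃ q ∈ P, p ≠ q ∧ (S ∩ p).card = 2 ∧ (S ∩ q).card = 1) ∧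
    (4 < Fintype.card Ω →
      ∀ P Q : Finset (Finset Ω), IsBlockSystem G P → NontrivialSystem P →
        IsBlockSystem G Q → NontrivialSystem Q → P = Q) := by
  refine ⟨fun P hP hnt => ThreeEt.partA hS hP hnt,
    fun P hP hnt => ThreeEt.partB hS hP hnt,
    fun h4 P Q hP hntP hQ hntQ => ThreeEt.partC htrans hS h4 hP hntP hQ hntQ⟩
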